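/- arXiv:2501.13510 — 5 statements merged into one kernel-verified Lean document; each statement's English description precedes it below -/
import Mathlib

section
/- Let k be an algebraically closed field, S a finitely generated commutative k-algebra, and ∼ an equivalence relation on the set Max S of maximal ideals of S, with invariant ring S^∼. Let A be any commutative k-algebra and φ : A → S a k-algebra homomorphism such that φ⁻¹(M) = φ⁻¹(N) whenever M ∼ N. Then φ(A) ⊆ S^∼; i.e. there is a unique k-algebra homomorphism ψ : A → S^∼ whose composite with the inclusion S^∼ ↪ S equals φ. (Equivalently, π : Spec S → Spec S^∼ is a categorical quotient of Spec S by ∼ in the category of affine k-schemes.) -/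
/-- Two maximal ideals `M, N` of a `k`-algebra `S` (all of whose residue fields are `k`)
give the same value `f(M) = f(N) ∈ k` of an element `f ∈ S` iff there is a scalar `c : k`
with `f - c ∈ M` and `f - c ∈ N`. -/
def sameValue (k : Type*) {S : Type*} [CommSemiring k] [CommRing S] [Algebra k S]
    (f : S) (M N : Ideal S) : Prop :=
  ∃ c : k, f - algebraMap k S c ∈ M ∧ f - algebraMap k S c ∈ N

/-- The invariant ring `S^∼` of an equivalence relation `∼` on `Max S`:
the `k`-subalgebra of all `f ∈ S` with `f(M) = f(N)` whenever `M ∼ N`. -/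
def invariantSubalgebra (k : Type*) {S : Type*} [Field k] [CommRing S] [Algebra k S]
    (r : MaximalSpectrum S → MaximalSpectrum S → Prop) : Subalgebra k S where
  carrier := {f | ∀ M N : MaximalSpectrum S, r M N → sameValue k f M.asIdeal N.asIdeal}
  add_mem' := by
    intro a b ha hb M N h
    obtain ⟨c, hc1, hc2⟩ := ha M N h
    obtain ⟨d, hd1, hd2⟩ := hb M N h
    refine ⟨c + d, ?_, ?_⟩
    · have : a + b - algebraMap _ _ (c + d) =
        (a - algebraMap _ _ c) + (b - algebraMap _ _ d) := by rw [map_add]; ring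
      rw [this]; exact add_mem hc1 hd1
    · have : a + b - algebraMap _ _ (c + d) =
        (a - algebraMap _ _ c) + (b - algebraMap _ _ d) := by rw [map_add]; ring
      rw [this]; exact add_mem hc2 hd2
  mul_mem' := by
    intro a b ha hb M N h
    obtain ⟨c, hc1, hc2⟩ := ha M N h
    obtain ⟨d, hd1, hd2⟩ := hb M N h
    have key : a * b - algebraMap _ _ (c * d) =
        a * (b - algebraMap _ _ d) + (a - algebraMap _ _ c) * algebraMap _ _ d := by
      rw [map_mul]; ring
    refine ⟨c * d, ?_, ?_⟩
    · rw [key]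
      exact add_mem (Ideal.mul_mem_left _ _ hd1) (Ideal.mul_mem_right _ _ hc1)
    · rw [key]
      exact add_mem (Ideal.mul_mem_left _ _ hd2) (Ideal.mul_mem_right _ _ hc2)
  algebraMap_mem' := fun c M N _ => ⟨c, by simp, by simp⟩


lemma exists_sub_mem_max {k S : Type*} [Field k] [IsAlgClosed k] [CommRing S] [Algebra k S]
    [Algebra.FiniteType k S] (M : Ideal S) [M.IsMaximal] (f : S) :
    ∃ c : k, f - algebraMap k S c ∈ M := by
  let F := S ⧸ M
  have h1 : Algebra.FiniteType k F :=
    Algebra.FiniteType.of_surjective (IsScalarTower.toAlgHom k S F)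
      Ideal.Quotient.mk_surjective
  letI : Field F := Ideal.Quotient.field M
  have h2 : Module.Finite k F := finite_of_finite_type_of_isJacobsonRing k F
  have h3 : Algebra.IsIntegral k F := Algebra.IsIntegral.of_finite k F
  obtain ⟨c, hc⟩ := (IsAlgClosed.algebraMap_bijective_of_isIntegral
    (k := k) (K := F)).2 (Ideal.Quotient.mk M f)
  refine ⟨c, ?_⟩
  rw [← Ideal.Quotient.eq_zero_iff_mem, map_sub]
  have : (Ideal.Quotient.mk M) (algebraMap k S c) = algebraMap k F c :=
    (IsScalarTower.algebraMap_apply k S F c).symm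
  rw [this, hc, sub_self]

/-- Let `k` be an algebraically closed field, `S` a finitely generated commutative `k`-algebra,
and `∼` an equivalence relation on `Max S`, with invariant ring `S^∼`. Let `A` be any
commutative `k`-algebra and `φ : A → S` a `k`-algebra homomorphism such that
`φ⁻¹(M) = φ⁻¹(N)` whenever `M ∼ N`. Then `φ(A) ⊆ S^∼`, i.e. there is a unique `k`-algebra
homomorphism `ψ : A → S^∼` whose composite with the inclusion `S^∼ ↪ S` is `φ`.
(Equivalently, `Spec S → Spec S^∼` is a categorical quotient in affine `k`-schemes.) -/
theorem stmt2 {k S A : Type*} [Field k] [IsAlgClosed k] [CommRing S] [Algebra k S]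
    [Algebra.FiniteType k S] [CommRing A] [Algebra k A]
    (r : MaximalSpectrum S → MaximalSpectrum S → Prop) (hr : Equivalence r)
    (φ : A →ₐ[k] S)
    (hφ : ∀ M N : MaximalSpectrum S, r M N →
      M.asIdeal.comap (φ : A →+* S) = N.asIdeal.comap (φ : A →+* S)) :
    (∀ a : A, φ a ∈ invariantSubalgebra k r) ∧
      ∃! ψ : A →ₐ[k] (invariantSubalgebra k r), (invariantSubalgebra k r).val.comp ψ = φ := by
  have key : ∀ a : A, φ a ∈ invariantSubalgebra k r := by
    intro a M N hMN
    haveI := M.isMaximal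
    obtain ⟨c, hc⟩ := exists_sub_mem_max (k := k) (S := S) M.asIdeal (φ a)
    refine ⟨c, hc, ?_⟩
    have hmem : a - algebraMap k A c ∈ M.asIdeal.comap (φ : A →+* S) := by
      simpa [Ideal.mem_comap, map_sub, AlgHom.commutes] using hc
    rw [hφ M N hMN] at hmem
    simpa [Ideal.mem_comap, map_sub, AlgHom.commutes] using hmem
  refine ⟨key, ⟨AlgHom.codRestrict φ _ key, rfl, ?_⟩⟩
  intro ψ hψ
  ext a
  exact congrArg (fun g : A →ₐ[k] S => g a) hψ
end

section
/- Let k be an algebraically closed field, S a finitely generated integral domain over k, ∼ an equivalence relation on Max S, and g a nonzero element of the invariant ring S^∼. The maximal ideals of the localization S_g are exactly the ideals M S_g for M ∈ Max S with g ∉ M; since g is invariant, M ∼ N implies that g ∉ M iff g ∉ N, so ∼ induces an equivalence relation ∼' on Max S_g by M S_g ∼' N S_g iff M ∼ N. Then, inside S_g, the localization (S^∼)_g of the invariant ring equals the invariant ring (S_g)^{∼'} of the localization. -/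
section Aux

variable {S : Type*} [CommRing S]

lemma aux_disjoint_powers {g : S} {M : Ideal S} (hM : M.IsPrime) (hgM : g ∉ M) :
    Disjoint (Submonoid.powers g : Set S) (M : Set S) := by
  rw [Set.disjoint_left]
  rintro x ⟨n, rfl⟩ hx
  exact hgM (hM.mem_of_pow_mem n hx)

lemma aux_map_isMaximal {g : S} {M : Ideal S} (hM : M.IsMaximal) (hgM : g ∉ M) :
    (M.map (algebraMap S (Localization.Away g))).IsMaximal := by
  have hdisj := aux_disjoint_powers hM.isPrime hgM
  have hprime : (M.map (algebraMap S (Localization.Away g))).IsPrime :=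
    IsLocalization.isPrime_of_isPrime_disjoint (Submonoid.powers g) _ M hM.isPrime hdisj
  obtain ⟨J, hJ, hle⟩ := Ideal.exists_le_maximal _ hprime.ne_top
  have hcomap : Ideal.comap (algebraMap S (Localization.Away g)) J = M := by
    have h1 : M ≤ Ideal.comap (algebraMap S (Localization.Away g)) J :=
      Ideal.map_le_iff_le_comap.mp hle
    have h2 : Ideal.comap (algebraMap S (Localization.Away g)) J ≠ ⊤ := by
      intro h
      refine hJ.ne_top ((Ideal.eq_top_iff_one _).mpr ?_)
      have h1 := (Ideal.eq_top_iff_one _).mp h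
      simpa using Ideal.mem_comap.mp h1
    exact (hM.eq_of_le h2 h1).symm
  have hJeq : J = M.map (algebraMap S (Localization.Away g)) := by
    conv_lhs => rw [← IsLocalization.map_comap (Submonoid.powers g) (Localization.Away g) J]
    exact congrArg (Ideal.map (algebraMap S (Localization.Away g))) hcomap
  rwa [← hJeq]

end Aux

lemma aux_mem_invariant_iff {k S : Type*} [Field k] [CommRing S] [Algebra k S]
    (r : MaximalSpectrum S → MaximalSpectrum S → Prop) (f : S) :
    f ∈ invariantSubalgebra k r ↔
      ∀ M N : MaximalSpectrum S, r M N → sameValue k f M.asIdeal N.asIdeal :=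
  Iff.rfl

/-- Let `k` be an algebraically closed field, `S` a finitely generated integral domain over
`k`, `∼` an equivalence relation on `Max S`, and `g` a nonzero element of the invariant ring
`S^∼`. The maximal ideals of `S_g` are exactly the `M S_g` for `M ∈ Max S` with `g ∉ M`, and
`∼` induces the equivalence relation `∼'` on `Max S_g` with `M S_g ∼' N S_g ↔ M ∼ N`.
Then, inside `S_g`, the localization `(S^∼)_g` of the invariant ring (the set of elements of
the form `f / gⁿ` with `f ∈ S^∼`) equals the invariant ring `(S_g)^{∼'}` of the
localization. -/
theorem stmt3 {k S : Type*} [Field k] [IsAlgClosed k] [CommRing S] [IsDomain S] [Algebra k S]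
    [Algebra.FiniteType k S]
    (r : MaximalSpectrum S → MaximalSpectrum S → Prop) (hr : Equivalence r)
    (g : S) (hg : g ∈ invariantSubalgebra k r) (hg0 : g ≠ 0)
    (r' : MaximalSpectrum (Localization.Away g) → MaximalSpectrum (Localization.Away g) → Prop)
    (hr' : ∀ M' N', r' M' N' ↔ ∃ M N : MaximalSpectrum S, r M N ∧
      M'.asIdeal = M.asIdeal.map (algebraMap S (Localization.Away g)) ∧
      N'.asIdeal = N.asIdeal.map (algebraMap S (Localization.Away g)))
    (x : Localization.Away g) :
    (∃ f ∈ invariantSubalgebra k r, ∃ n : ℕ,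
        x * algebraMap S (Localization.Away g) g ^ n = algebraMap S (Localization.Away g) f) ↔
      x ∈ invariantSubalgebra k (S := Localization.Away g) r' := by
  rw [aux_mem_invariant_iff]
  rw [aux_mem_invariant_iff] at hg
  have hgunit : IsUnit (algebraMap S (Localization.Away g) g) :=
    IsLocalization.map_units (Localization.Away g)
      (⟨g, Submonoid.mem_powers g⟩ : Submonoid.powers g)
  constructor
  · rintro ⟨f, hf, n, hxf⟩ M' N' hMN'
    rw [aux_mem_invariant_iff] at hf
    obtain ⟨M, N, hMN, hM', hN'⟩ := (hr' M' N').mp hMN'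
    obtain ⟨c, hc1, hc2⟩ := hf M N hMN
    obtain ⟨d, hd1, hd2⟩ := hg M N hMN
    have hd0 : d ≠ 0 := by
      rintro rfl
      simp only [map_zero, sub_zero] at hd1
      have hmem : algebraMap S (Localization.Away g) g ∈ M'.asIdeal :=
        hM' ▸ Ideal.mem_map_of_mem _ hd1
      exact M'.2.ne_top (Ideal.eq_top_of_isUnit_mem _ hmem hgunit)
    have key : ∀ (P : Ideal S), f - algebraMap k S c ∈ P → g - algebraMap k S d ∈ P →
        x - algebraMap k (Localization.Away g) (c / d ^ n) ∈
          P.map (algebraMap S (Localization.Away g)) := by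
      intro P hfc hgd
      have hmem1 : algebraMap S (Localization.Away g) (f - algebraMap k S c) ∈
          P.map (algebraMap S (Localization.Away g)) := Ideal.mem_map_of_mem _ hfc
      have hmem2 : algebraMap S (Localization.Away g) g -
          algebraMap k (Localization.Away g) d ∈
          P.map (algebraMap S (Localization.Away g)) := by
        rw [IsScalarTower.algebraMap_apply k S (Localization.Away g) d, ← map_sub]
        exact Ideal.mem_map_of_mem _ hgd
      obtain ⟨t, ht⟩ := sub_dvd_pow_sub_pow (algebraMap S (Localization.Away g) g)
        (algebraMap k (Localization.Away g) d) n
      have hpow : (algebraMap S (Localization.Away g) g) ^ n -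
          (algebraMap k (Localization.Away g) d) ^ n ∈
          P.map (algebraMap S (Localization.Away g)) := by
        rw [ht]; exact Ideal.mul_mem_right _ _ hmem2
      have hdn : (algebraMap k (Localization.Away g) (c / d ^ n)) *
          (algebraMap k (Localization.Away g) d) ^ n =
          algebraMap k (Localization.Away g) c := by
        rw [← map_pow, ← map_mul, div_mul_cancel₀ _ (pow_ne_zero n hd0)]
      have hcalc : (x - algebraMap k (Localization.Away g) (c / d ^ n)) *
          (algebraMap S (Localization.Away g) g) ^ n =
          algebraMap S (Localization.Away g) (f - algebraMap k S c)
          + algebraMap k (Localization.Away g) (c / d ^ n) *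
            ((algebraMap k (Localization.Away g) d) ^ n -
              (algebraMap S (Localization.Away g) g) ^ n) := by
        rw [sub_mul, hxf, map_sub, ← IsScalarTower.algebraMap_apply k S (Localization.Away g) c,
          ← hdn]
        ring
      have hmem3 : algebraMap k (Localization.Away g) (c / d ^ n) *
          ((algebraMap k (Localization.Away g) d) ^ n -
            (algebraMap S (Localization.Away g) g) ^ n) ∈
          P.map (algebraMap S (Localization.Away g)) := by
        refine Ideal.mul_mem_left _ _ ?_
        have : (algebraMap k (Localization.Away g) d) ^ n -
            (algebraMap S (Localization.Away g) g) ^ n =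
            -((algebraMap S (Localization.Away g) g) ^ n -
              (algebraMap k (Localization.Away g) d) ^ n) := by ring
        rw [this]
        exact neg_mem hpow
      have hmul : (x - algebraMap k (Localization.Away g) (c / d ^ n)) *
          (algebraMap S (Localization.Away g) g) ^ n ∈
          P.map (algebraMap S (Localization.Away g)) := by
        rw [hcalc]; exact add_mem hmem1 hmem3
      exact (Ideal.unit_mul_mem_iff_mem _ (hgunit.pow n)).mp (by rwa [mul_comm] at hmul)
    exact ⟨c / d ^ n, hM' ▸ key M.asIdeal hc1 hd1, hN' ▸ key N.asIdeal hc2 hd2⟩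
  · intro hx
    obtain ⟨⟨a, s⟩, hs⟩ := IsLocalization.surj (Submonoid.powers g) x
    obtain ⟨m, hm⟩ := s.2
    have hm' : g ^ m = (s : S) := hm
    refine ⟨a * g, ?_, m + 1, ?_⟩
    · rw [aux_mem_invariant_iff]
      intro M N hMN
      obtain ⟨d, hd1, hd2⟩ := hg M N hMN
      by_cases hgM : g ∈ M.asIdeal
      · -- both ideals contain g; value is 0
        have hd0 : d = 0 := by
          by_contra hd0
          have hmem : algebraMap k S d ∈ M.asIdeal := by
            have := M.asIdeal.sub_mem hgM hd1
            simpa using this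
          exact M.2.ne_top (Ideal.eq_top_of_isUnit_mem _ hmem
            ((algebraMap k S).isUnit_map (Ne.isUnit hd0)))
        subst hd0
        simp only [map_zero, sub_zero] at hd1 hd2
        exact ⟨0, by simpa using Ideal.mul_mem_left _ a hgM,
          by simpa using Ideal.mul_mem_left _ a hd2⟩
      · have hd0 : d ≠ 0 := by
          rintro rfl
          simp only [map_zero, sub_zero] at hd1
          exact hgM hd1
        have hgN : g ∉ N.asIdeal := by
          intro hgN
          have hmem : algebraMap k S d ∈ N.asIdeal := by
            have := N.asIdeal.sub_mem hgN hd2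
            simpa using this
          exact N.2.ne_top (Ideal.eq_top_of_isUnit_mem _ hmem
            ((algebraMap k S).isUnit_map (Ne.isUnit hd0)))
        have hMN' : r' ⟨M.asIdeal.map (algebraMap S (Localization.Away g)),
            aux_map_isMaximal M.2 hgM⟩
            ⟨N.asIdeal.map (algebraMap S (Localization.Away g)), aux_map_isMaximal N.2 hgN⟩ :=
          (hr' _ _).mpr ⟨M, N, hMN, rfl, rfl⟩
        obtain ⟨c', h1, h2⟩ := hx _ _ hMN'
        have key2 : ∀ (P : Ideal S), P.IsPrime → g ∉ P → g - algebraMap k S d ∈ P →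
            x - algebraMap k (Localization.Away g) c' ∈
              P.map (algebraMap S (Localization.Away g)) →
            a * g - algebraMap k S (c' * d ^ (m + 1)) ∈ P := by
          intro P hP hgP hgd hxc
          have hcomap := IsLocalization.comap_map_of_isPrime_disjoint (Submonoid.powers g)
            (Localization.Away g) hP (aux_disjoint_powers hP hgP)
          rw [← hcomap, Ideal.mem_comap, map_sub]
          have hAa : algebraMap S (Localization.Away g) a =
              x * (algebraMap S (Localization.Away g) g) ^ m := by
            rw [← hs, ← hm', map_pow]
          have hgd' : algebraMap S (Localization.Away g) g -
              algebraMap k (Localization.Away g) d ∈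
              P.map (algebraMap S (Localization.Away g)) := by
            rw [IsScalarTower.algebraMap_apply k S (Localization.Away g) d, ← map_sub]
            exact Ideal.mem_map_of_mem _ hgd
          obtain ⟨t, ht⟩ := sub_dvd_pow_sub_pow (algebraMap S (Localization.Away g) g)
            (algebraMap k (Localization.Away g) d) (m + 1)
          have hcalc : algebraMap S (Localization.Away g) (a * g) -
              algebraMap S (Localization.Away g) (algebraMap k S (c' * d ^ (m + 1))) =
              (x - algebraMap k (Localization.Away g) c') *
                (algebraMap S (Localization.Away g) g) ^ (m + 1)
              + algebraMap k (Localization.Away g) c' *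
                ((algebraMap S (Localization.Away g) g) ^ (m + 1) -
                  (algebraMap k (Localization.Away g) d) ^ (m + 1)) := by
            rw [map_mul, hAa, ← IsScalarTower.algebraMap_apply k S (Localization.Away g),
              map_mul, map_pow]
            ring
          rw [hcalc]
          exact add_mem (Ideal.mul_mem_right _ _ hxc)
            (Ideal.mul_mem_left _ _ (by rw [ht]; exact Ideal.mul_mem_right _ _ hgd'))
        exact ⟨c' * d ^ (m + 1), key2 M.asIdeal M.2.isPrime hgM hd1 h1,
          key2 N.asIdeal N.2.isPrime hgN hd2 h2⟩
    · rw [map_mul, pow_succ, ← mul_assoc, ← map_pow, hm', hs]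
end

section
/- Let k be an uncountable algebraically closed field, X a k-scheme of finite type, Y a k-scheme, and π : X → Y a morphism of k-schemes such that for every open subset U of Y the pullback map O_Y(U) → O_X(π⁻¹(U)) on sections is injective. Then Y is a Jacobson scheme; in particular the underlying topological space of Y is a Jacobson space. -/
open Cardinal

lemma aux_jacobson_bot {k B : Type} [Field k] [Uncountable k] [CommRing B] [IsDomain B]
    [Algebra k B] (hrank : Module.rank k B ≤ Cardinal.aleph0) :
    Ideal.jacobson (⊥ : Ideal B) = ⊥ := by
  refine eq_bot_iff.mpr fun b hb => ?_
  rw [Submodule.mem_bot]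
  by_contra hb0
  -- every `b - a` with `a ≠ 0` is a unit
  have hunit : ∀ a : k, a ≠ 0 → IsUnit (b - algebraMap k B a) := by
    intro a ha
    have h1 := Ideal.mem_jacobson_bot.mp hb (-(algebraMap k B a⁻¹))
    have h2 : IsUnit (algebraMap k B (-a)) :=
      (IsUnit.mk0 (-a) (neg_ne_zero.mpr ha)).map (algebraMap k B)
    have key : algebraMap k B a * algebraMap k B a⁻¹ = 1 := by
      rw [← map_mul, mul_inv_cancel₀ ha, map_one]
    have := h2.mul h1
    convert this using 1
    rw [map_neg]
    linear_combination (-b : B) * key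
  -- if `b` were algebraic it would be a unit, contradicting `jacobson ⊥ ≠ ⊤`
  have halg : Transcendental k b := by
    intro halg
    have hbu : IsUnit b := (halg.isIntegral).isUnit hb0
    obtain ⟨m, hm⟩ := Ideal.exists_maximal B
    have hbm : b ∈ m := by
      rw [Ideal.jacobson] at hb
      exact Submodule.mem_sInf.mp hb m ⟨bot_le, hm⟩
    exact hm.ne_top (m.eq_top_of_isUnit_mem hbm hbu)
  -- pass to the fraction field
  set L := FractionRing B with hL
  have hBL : Function.Injective (algebraMap B L) := IsFractionRing.injective B L
  have htr : Transcendental k (algebraMap B L b) := by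
    intro h
    exact halg ((isAlgebraic_algHom_iff (IsScalarTower.toAlgHom k B L) hBL).mp h)
  have li := htr.linearIndependent_sub_inv
  have li2 := li.comp (Subtype.val : {a : k // a ≠ 0} → k) Subtype.val_injective
  set u : {a : k // a ≠ 0} → B := fun a => ↑(hunit a a.2).unit⁻¹ with hu
  have li3 : LinearIndependent k u := by
    refine LinearIndependent.of_comp (IsScalarTower.toAlgHom k B L).toLinearMap ?_
    have he : (⇑(IsScalarTower.toAlgHom k B L).toLinearMap) ∘ u
        = (fun a : k => ((algebraMap B L) b - (algebraMap k L) a)⁻¹) ∘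
          (Subtype.val : {a : k // a ≠ 0} → k) := by
      funext a
      simp only [Function.comp_apply, AlgHom.toLinearMap_apply, IsScalarTower.toAlgHom_apply]
      refine eq_inv_of_mul_eq_one_left ?_
      rw [IsScalarTower.algebraMap_apply k B L a.1, ← map_sub, ← map_mul,
        (hunit a.1 a.2).val_inv_mul, map_one]
    rw [he]
    exact li2
  have hcard := li3.cardinal_le_rank
  have hle : (#{a : k // a ≠ 0}) ≤ Cardinal.aleph0 := hcard.trans hrank
  have hcount : Countable {a : k // a ≠ 0} := Cardinal.mk_le_aleph0_iff.mp hle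
  have hck : Countable k := by
    have hs : Set.Countable {a : k | a ≠ 0} := Set.countable_coe_iff.mp hcount
    have h2 := hs.insert 0
    have h3 : insert (0 : k) {a : k | a ≠ 0} = Set.univ := by
      ext a; by_cases h : a = 0 <;> simp [h]
    rw [h3] at h2
    exact Set.countable_univ_iff.mp h2
  exact (not_countable (α := k)) hck

lemma aux_isJacobsonRing {k A : Type} [Field k] [Uncountable k] [CommRing A] [Algebra k A]
    (hrank : Module.rank k A ≤ Cardinal.aleph0) : IsJacobsonRing A := by
  rw [isJacobsonRing_iff_prime_eq]
  intro P hP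
  rw [Ideal.jacobson_eq_iff_jacobson_quotient_eq_bot]
  refine aux_jacobson_bot (k := k) ?_
  refine le_trans ?_ hrank
  exact (Ideal.Quotient.mkₐ k P).toLinearMap.rank_le_of_surjective
    (Ideal.Quotient.mkₐ_surjective k P)


open AlgebraicGeometry CategoryTheory TopologicalSpace

section CRank

/-- The rank of `A` as a `k`-vector space, via the algebra structure induced by `f`. -/
private noncomputable def crank {k A : Type} [Field k] [CommRing A] (f : k →+* A) : Cardinal :=
  letI := f.toAlgebra
  Module.rank k A

private lemma crank_le_of_injective {k A B : Type} [Field k] [CommRing A] [CommRing B]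
    (f : k →+* A) (f' : k →+* B) (g : A →+* B) (hg : Function.Injective g)
    (hcomp : g.comp f = f') : crank f ≤ crank f' := by
  letI := f.toAlgebra
  letI := f'.toAlgebra
  let g' : A →ₐ[k] B := { g with commutes' := fun r => RingHom.congr_fun hcomp r }
  exact LinearMap.rank_le_of_injective g'.toLinearMap hg

private lemma crank_le_aleph0_of_finiteType {k A : Type} [Field k] [CommRing A]
    {f : k →+* A} (hf : f.FiniteType) : crank f ≤ Cardinal.aleph0 := by
  letI := f.toAlgebra
  have hft : Algebra.FiniteType k A := hf
  obtain ⟨ι, hfin, g, hg⟩ := Algebra.FiniteType.iff_quotient_mvPolynomial'.mp hft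
  have h1 : Module.rank k A ≤ Module.rank k (MvPolynomial ι k) :=
    LinearMap.rank_le_of_surjective g.toLinearMap hg
  refine h1.trans ?_
  rw [MvPolynomial.rank_eq]
  exact Cardinal.mk_le_aleph0

private lemma crank_le_aleph0_of_cover {k A : Type} [Field k] [CommRing A] (f : k →+* A)
    {ι : Type} [Finite ι] (B : ι → Type) [∀ i, CommRing (B i)] (g : ∀ i, A →+* B i)
    (hsep : ∀ x : A, (∀ i, g i x = 0) → x = 0)
    (h : ∀ i, crank ((g i).comp f) ≤ Cardinal.aleph0) :
    crank f ≤ Cardinal.aleph0 := by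
  letI := f.toAlgebra
  letI : ∀ i, Algebra k (B i) := fun i => ((g i).comp f).toAlgebra
  let g' : ∀ i, A →ₐ[k] B i := fun i => { g i with commutes' := fun r => rfl }
  let G : A →ₗ[k] ∀ i, B i := LinearMap.pi (fun i => (g' i).toLinearMap)
  have hG : Function.Injective G := by
    intro x y hxy
    have hs := hsep (x - y) (fun i => by
      have := congrFun hxy i
      simp only [G, LinearMap.pi_apply, AlgHom.toLinearMap_apply] at this
      rw [map_sub, sub_eq_zero]; exact this)
    exact sub_eq_zero.mp hs
  have h1 : Module.rank k A ≤ Module.rank k (∀ i, B i) := LinearMap.rank_le_of_injective G hG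
  refine h1.trans ?_
  cases nonempty_fintype ι
  rw [rank_pi]
  refine le_trans (Cardinal.sum_le_sum _ (fun _ => Cardinal.aleph0) h) ?_
  rw [Cardinal.sum_const']
  exact le_trans (mul_le_mul' Cardinal.mk_le_aleph0 le_rfl) (le_of_eq Cardinal.aleph0_mul_aleph0)

end CRank

section Geometry

/-- The structure map on sections over `W` of a scheme over `k`. -/
private noncomputable def structMap {k : Type} [Field k] {X : Scheme}
    (sX : X ⟶ Spec (CommRingCat.of k)) (W : X.Opens) : CommRingCat.of k ⟶ Γ(X, W) :=
  (Scheme.ΓSpecIso (CommRingCat.of k)).inv ≫ sX.appLE ⊤ W (by simp)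

private lemma structMap_restrict {k : Type} [Field k] {X : Scheme}
    (sX : X ⟶ Spec (CommRingCat.of k)) {W W' : X.Opens} (h : W' ≤ W) :
    structMap sX W ≫ X.presheaf.map (homOfLE h).op = structMap sX W' := by
  rw [structMap, structMap, Category.assoc]; congr 1; exact Scheme.Hom.appLE_map _ _ _

private lemma structMap_finiteType {k : Type} [Field k] {X : Scheme}
    (sX : X ⟶ Spec (CommRingCat.of k)) [LocallyOfFiniteType sX] (V : X.affineOpens) :
    RingHom.FiniteType (structMap sX V.1).hom := by
  have h : RingHom.FiniteType (sX.appLE ⊤ V.1 (by simp)).hom :=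
    HasRingHomProperty.appLE (P := @LocallyOfFiniteType) sX inferInstance
      ⟨⊤, isAffineOpen_top _⟩ V (by simp)
  exact h.comp (RingHom.FiniteType.of_surjective _
    (Scheme.ΓSpecIso (CommRingCat.of k)).commRingCatIsoToRingEquiv.symm.surjective)

private lemma exists_finite_affine_cover {X : Scheme} (W : X.Opens) (hW : IsCompact (W : Set X)) :
    ∃ s : Finset X.affineOpens, (∀ V ∈ s, (V : X.Opens) ≤ W) ∧
      W ≤ ⨆ i : {V // V ∈ s}, (i.1 : X.Opens) := by
  classical
  let ι := {V : X.affineOpens // (V : X.Opens) ≤ W}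
  have hcov : (W : Set X) ⊆ ⋃ i : ι, ((i.1 : X.Opens) : Set X) := by
    intro x hx
    obtain ⟨_, ⟨V, hV, rfl⟩, hxV, hVW⟩ :=
      X.isBasis_affineOpens.exists_subset_of_mem_open hx W.2
    exact Set.mem_iUnion.mpr ⟨⟨⟨V, hV⟩, hVW⟩, hxV⟩
  obtain ⟨t, ht⟩ := hW.elim_finite_subcover (fun i : ι => ((i.1 : X.Opens) : Set X))
    (fun i => (i.1.1).2) hcov
  refine ⟨t.image Subtype.val, ?_, ?_⟩
  · intro V hV
    rw [Finset.mem_image] at hV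
    obtain ⟨i, _, rfl⟩ := hV
    exact i.2
  · intro x hx
    obtain ⟨i, hi⟩ := Set.mem_iUnion.mp (ht hx)
    obtain ⟨hit, hxi⟩ := Set.mem_iUnion.mp hi
    exact Opens.mem_iSup.mpr ⟨⟨i.1, Finset.mem_image_of_mem _ hit⟩, hxi⟩

private lemma crank_sections_le_aleph0 {k : Type} [Field k] {X : Scheme}
    (sX : X ⟶ Spec (CommRingCat.of k)) [LocallyOfFiniteType sX]
    (W : X.Opens) (hW : IsCompact (W : Set X)) :
    crank (k := k) (A := Γ(X, W)) (structMap sX W).hom ≤ Cardinal.aleph0 := by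
  classical
  obtain ⟨s, hsle, hscover⟩ := exists_finite_affine_cover W hW
  refine crank_le_aleph0_of_cover _ (ι := {V // V ∈ s}) (fun i => Γ(X, i.1.1))
    (fun i => (X.presheaf.map (homOfLE (hsle i.1 i.2)).op).hom) ?_ ?_
  · intro x hx
    refine X.sheaf.eq_of_locally_eq' (fun i : {V // V ∈ s} => (i.1 : X.Opens)) W
      (fun i => homOfLE (hsle i.1 i.2)) hscover x 0 ?_
    intro i
    rw [map_zero]
    exact hx i
  · intro i
    have heq : ((X.presheaf.map (homOfLE (hsle i.1 i.2)).op).hom).comp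
        (structMap sX W).hom = (structMap sX i.1.1).hom :=
      congrArg CommRingCat.Hom.hom (structMap_restrict sX _)
    rw [heq]
    exact crank_le_aleph0_of_finiteType (structMap_finiteType sX i.1)

end Geometry


open AlgebraicGeometry CategoryTheory TopologicalSpace

/-- Let `k` be an uncountable algebraically closed field, `X` a `k`-scheme of finite type
(i.e. the structure morphism is locally of finite type and quasi-compact), `Y` a `k`-scheme,
and `π : X → Y` a morphism of `k`-schemes such that for every open `U ⊆ Y` the pullback
`O_Y(U) → O_X(π⁻¹(U))` on sections is injective. Then `Y` is a Jacobson scheme; in particular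
its underlying topological space is a Jacobson space. -/
theorem stmt5 {k : Type} [Field k] [IsAlgClosed k] [Uncountable k]
    (X Y : Scheme) (sX : X ⟶ Spec (CommRingCat.of k)) (sY : Y ⟶ Spec (CommRingCat.of k))
    [LocallyOfFiniteType sX] [QuasiCompact sX]
    (π : X ⟶ Y) (hπ : π ≫ sY = sX)
    (hinj : ∀ U : Y.Opens, Function.Injective (π.app U)) :
    JacobsonSpace Y := by
  subst hπ
  haveI : CompactSpace X := QuasiCompact.compactSpace_of_compactSpace (π ≫ sY)
  haveI : IsNoetherian X := by
    obtain ⟨s, hsle, hscover⟩ := exists_finite_affine_cover (⊤ : X.Opens)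
      (by simpa using CompactSpace.isCompact_univ)
    have htop : (⨆ i : {V // V ∈ s}, (i.1 : X.Opens)) = ⊤ := top_le_iff.mp hscover
    rw [isNoetherian_iff_of_finite_iSup_eq_top htop]
    intro i
    have hft := structMap_finiteType (π ≫ sY) i.1
    letI : Algebra k Γ(X, i.1.1) := (structMap (π ≫ sY) i.1.1).hom.toAlgebra
    haveI : Algebra.FiniteType k Γ(X, i.1.1) := hft
    exact Algebra.FiniteType.isNoetherianRing k Γ(X, i.1.1)
  haveI : TopologicalSpace.NoetherianSpace X := inferInstance
  rw [(show TopologicalSpace.IsOpenCover (fun U : Y.affineOpens => (U : Y.Opens)) from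
    iSup_affineOpens_eq_top Y).jacobsonSpace_iff]
  intro U
  have hcomp : ((π.app U.1).hom).comp
      ((structMap sY U.1).hom)
      = (structMap (π ≫ sY) (π ⁻¹ᵁ U.1)).hom := by
    show (structMap sY U.1 ≫ π.app U.1).hom = (structMap (π ≫ sY) (π ⁻¹ᵁ U.1)).hom
    congr 1
    rw [structMap, structMap, Category.assoc, Scheme.Hom.app_eq_appLE]
    congr 1; exact Scheme.Hom.appLE_comp_appLE _ _ _ _ _ _ _
  have hrank : crank (k := k) (A := Γ(Y, U.1)) (structMap sY U.1).hom ≤ Cardinal.aleph0 := by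
    refine le_trans (crank_le_of_injective _ _ _ (hinj U.1) hcomp) ?_
    exact crank_sections_le_aleph0 (π ≫ sY) (π ⁻¹ᵁ U.1)
      (TopologicalSpace.NoetherianSpace.isCompact _)
  letI : Algebra k Γ(Y, U.1) := (structMap sY U.1).hom.toAlgebra
  haveI hjac : IsJacobsonRing Γ(Y, U.1) := aux_isJacobsonRing (k := k) hrank
  haveI : JacobsonSpace (Spec Γ(Y, U.1)) :=
    inferInstanceAs (JacobsonSpace (PrimeSpectrum Γ(Y, U.1)))
  exact JacobsonSpace.of_isOpenEmbedding
    (TopCat.homeoOfIso (Scheme.forgetToTop.mapIso U.2.isoSpec)).isOpenEmbedding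
end

section
/- Let k be an algebraically closed field, S a finitely generated commutative k-algebra, and R a k-subalgebra of S such that the pair (R,S) satisfies the relative weak Nullstellensatz, i.e. IS ≠ S for every proper ideal I of R. Then for every ideal I of R, { M ∩ R : M ∈ Max S and IS ⊆ M } = { m ∈ Max R : I ⊆ m }. In particular, the image under the contraction map π_max : Max S → Max R, M ↦ M ∩ R, of the closed subset { M ∈ Max S : IS ⊆ M } of Max S is the closed subset { m ∈ Max R : I ⊆ m } of Max R. -/
/-- Let `k` be an algebraically closed field, `S` a finitely generated commutative `k`-algebra,
and `R` a `k`-subalgebra of `S` such that the pair `(R,S)` satisfies the relative weak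
Nullstellensatz, i.e. `IS ≠ S` for every proper ideal `I` of `R`. Then for every ideal `I` of
`R`, `{ M ∩ R : M ∈ Max S, IS ⊆ M } = { m ∈ Max R : I ⊆ m }`; in particular the image under
the contraction map `Max S → Max R` of the closed subset of `Max S` defined by `IS` is the
closed subset of `Max R` defined by `I`. -/
theorem stmt15 {k S : Type*} [Field k] [IsAlgClosed k] [CommRing S] [Algebra k S]
    [Algebra.FiniteType k S] (R : Subalgebra k S)
    (hRWN : ∀ I : Ideal R, I ≠ ⊤ → I.map (algebraMap R S) ≠ ⊤)
    (I : Ideal R) :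
    {m : Ideal R | ∃ M : Ideal S, M.IsMaximal ∧ I.map (algebraMap R S) ≤ M ∧
        M.comap (algebraMap R S) = m} =
      {m : Ideal R | m.IsMaximal ∧ I ≤ m} := by
  ext m
  simp only [Set.mem_setOf_eq]
  constructor
  · rintro ⟨M, hM, hIM, rfl⟩
    constructor
    · -- the residue field S/M is k, hence the contraction is maximal
      letI : Field (S ⧸ M) := Ideal.Quotient.field M
      haveI : Algebra.FiniteType k (S ⧸ M) :=
        Algebra.FiniteType.trans ‹Algebra.FiniteType k S›
          (Algebra.FiniteType.of_surjective
            (Algebra.ofId S (S ⧸ M)) (fun x => by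
              obtain ⟨y, hy⟩ := Ideal.Quotient.mk_surjective x
              exact ⟨y, hy⟩))
      haveI : Module.Finite k (S ⧸ M) := finite_of_finite_type_of_isJacobsonRing k (S ⧸ M)
      haveI : Algebra.IsIntegral k (S ⧸ M) := Algebra.IsIntegral.of_finite k _
      have hsurj : Function.Surjective (algebraMap k (S ⧸ M)) :=
        IsAlgClosed.algebraMap_bijective_of_isIntegral.2
      have hsurj' : Function.Surjective ((Ideal.Quotient.mk M).comp (algebraMap R S)) := by
        intro x
        obtain ⟨c, hc⟩ := hsurj x
        refine ⟨algebraMap k R c, ?_⟩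
        rw [← hc]
        simp only [RingHom.comp_apply]
        rw [← IsScalarTower.algebraMap_apply k R S]
        rfl
      have : M.comap (algebraMap R S) =
          RingHom.ker ((Ideal.Quotient.mk M).comp (algebraMap R S)) := by
        ext x
        rw [Ideal.mem_comap, RingHom.mem_ker, RingHom.comp_apply,
          Ideal.Quotient.eq_zero_iff_mem]
      rw [this]
      exact RingHom.ker_isMaximal_of_surjective _ hsurj'
    · intro x hx
      exact hIM (Ideal.mem_map_of_mem _ hx)
  · rintro ⟨hm, hIm⟩
    obtain ⟨M, hM, hmM⟩ := Ideal.exists_le_maximal _ (hRWN m hm.ne_top)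
    refine ⟨M, hM, le_trans (Ideal.map_mono hIm) hmM, ?_⟩
    have h1 : m ≤ M.comap (algebraMap R S) :=
      le_trans (Ideal.le_comap_map) (Ideal.comap_mono hmM)
    have h2 : M.comap (algebraMap R S) ≠ ⊤ := by
      intro h
      have : (1 : R) ∈ M.comap (algebraMap R S) := h ▸ Submodule.mem_top
      simp only [Ideal.mem_comap, map_one] at this
      exact hM.ne_top (Ideal.eq_top_of_isUnit_mem _ this isUnit_one)
    exact ((hm.eq_of_le h2 h1).symm)
end

section
/- Let k be an uncountable field and let R be a commutative k-algebra whose dimension as a k-vector space is countable. Then R is a Jacobson ring. -/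
open Cardinal in
/-- Key lemma: a domain of countable dimension over an uncountable field has trivial
Jacobson radical. -/
lemma amitsur_jacobson_bot {k S : Type*} [Field k] [Uncountable k] [CommRing S] [IsDomain S]
    [Algebra k S] (h : Module.rank k S ≤ Cardinal.aleph0) :
    Ideal.jacobson (⊥ : Ideal S) = ⊥ := by
  rw [eq_bot_iff]
  intro f hf
  rw [Ideal.mem_bot]
  by_contra hf0
  rw [Ideal.mem_jacobson_bot] at hf
  -- work in the fraction field
  set K := FractionRing S
  have hinj : Function.Injective (algebraMap S K) := IsFractionRing.injective S K
  set x : K := algebraMap S K f with hx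
  have hx0 : x ≠ 0 := fun hc => hf0 (hinj (by rw [← hx, hc, map_zero]))
  by_cases halg : IsAlgebraic k x
  · -- algebraic case: `f` is a unit, contradicting `1 + f * (-f⁻¹)` being a unit
    have hint : IsIntegral k x := halg.isIntegral
    have hmem : x⁻¹ ∈ Algebra.adjoin k {x} := hint.inv_mem_adjoin
    have hle : Algebra.adjoin k {x} ≤ (IsScalarTower.toAlgHom k S K).range := by
      apply Algebra.adjoin_le
      rintro y rfl
      exact ⟨f, rfl⟩
    obtain ⟨g, hg⟩ := hle hmem
    have hfg : f * g = 1 := by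
      apply hinj
      rw [map_mul, map_one, ← hx]
      show x * algebraMap S K g = 1
      rw [show algebraMap S K g = x⁻¹ from hg, mul_inv_cancel₀ hx0]
    have := hf (-g)
    rw [mul_neg, hfg, neg_add_cancel, isUnit_zero_iff] at this
    exact zero_ne_one this
  · -- transcendental case: uncountably many independent elements in the image of `S`
    replace halg : Transcendental k x := halg
    have hli := halg.linearIndependent_sub_inv
    set M : Submodule k K := LinearMap.range (IsScalarTower.toAlgHom k S K).toLinearMap with hM
    -- each `(x - a)⁻¹` with `a ≠ 0` lies in `M`
    have hmem : ∀ a : k, a ≠ 0 → (x - algebraMap k K a)⁻¹ ∈ M := by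
      intro a ha
      obtain ⟨u, hu⟩ := hf (algebraMap k S (-a⁻¹))
      have hcd : (algebraMap S K (f * algebraMap k S (-a⁻¹) + 1)) *
          (algebraMap S K ↑u⁻¹) = 1 := by
        rw [← hu, ← map_mul, u.mul_inv, map_one]
      have hcval : (algebraMap S K (f * algebraMap k S (-a⁻¹) + 1))
          = (-a⁻¹) • (x - algebraMap k K a) := by
        rw [map_add, map_mul, map_one, ← hx, ← IsScalarTower.algebraMap_apply k S K,
          Algebra.algebraMap_eq_smul_one (-a⁻¹ : k), Algebra.algebraMap_eq_smul_one (a : k),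
          smul_sub, smul_smul, mul_smul_comm, mul_one, neg_mul, inv_mul_cancel₀ ha]
        simp
      have hd : (x - algebraMap k K a) * algebraMap S K ↑u⁻¹ = (-a) • (1 : K) := by
        have h2 : (-a⁻¹ : k) • ((x - algebraMap k K a) * algebraMap S K ↑u⁻¹) = 1 := by
          rw [← smul_mul_assoc, ← hcval]; exact hcd
        have h3 := congrArg (fun z => (-a : k) • z) h2
        simp only [smul_smul] at h3
        rw [neg_mul_neg, mul_inv_cancel₀ ha, one_smul] at h3
        exact h3
      have hprod : (x - algebraMap k K a) * ((-a⁻¹ : k) • algebraMap S K ↑u⁻¹) = 1 := by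
        rw [mul_smul_comm, hd, smul_smul, neg_mul_neg, inv_mul_cancel₀ ha, one_smul]
      have hval : (x - algebraMap k K a)⁻¹ = (-a⁻¹ : k) • algebraMap S K ↑u⁻¹ :=
        inv_eq_of_mul_eq_one_right hprod
      rw [hval]
      exact M.smul_mem _ ⟨(u⁻¹ : Sˣ), rfl⟩
    -- package into a linearly independent family valued in `M`
    set ι := {a : k // a ≠ 0}
    let w : ι → M := fun a => ⟨(x - algebraMap k K (a : k))⁻¹, hmem a a.2⟩
    have hwli : LinearIndependent k w := by
      apply LinearIndependent.of_comp M.subtype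
      have : (M.subtype ∘ w) = (fun a : k => (x - algebraMap k K a)⁻¹) ∘ (fun a : ι => (a : k)) :=
        rfl
      rw [this]
      exact hli.comp _ Subtype.val_injective
    have hrankM : Module.rank k M ≤ Cardinal.aleph0 :=
      le_trans (rank_range_le _) h
    have hcard := hwli.cardinal_lift_le_rank
    have : Cardinal.lift.{_} (Cardinal.mk ι) ≤ Cardinal.lift.{_} Cardinal.aleph0 :=
      le_trans hcard (Cardinal.lift_le.mpr hrankM)
    rw [Cardinal.lift_aleph0, Cardinal.lift_le_aleph0, Cardinal.mk_le_aleph0_iff] at this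
    -- hence `k` is countable, contradiction
    have hck : Countable k := by
      have h1 : ({a : k | a ≠ 0} : Set k).Countable := Set.countable_coe_iff.mp this
      have h2 : (insert (0 : k) {a : k | a ≠ 0}).Countable := h1.insert 0
      have h3 : insert (0 : k) {a : k | a ≠ 0} = Set.univ := by
        ext a; simp [em]
      rw [h3, Set.countable_univ_iff] at h2
      exact h2
    exact not_countable hck

/-- (Amitsur) Let `k` be an uncountable field and let `R` be a commutative `k`-algebra whose
dimension as a `k`-vector space is countable. Then `R` is a Jacobson ring. -/
theorem stmt16 {k R : Type*} [Field k] [Uncountable k] [CommRing R] [Algebra k R]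
    (h : Module.rank k R ≤ Cardinal.aleph0) : IsJacobsonRing R := by
  rw [isJacobsonRing_iff_prime_eq]
  intro P hP
  rw [Ideal.jacobson_eq_iff_jacobson_quotient_eq_bot]
  haveI : IsDomain (R ⧸ P) := Ideal.Quotient.isDomain P
  apply amitsur_jacobson_bot (k := k)
  refine le_trans ?_ h
  exact LinearMap.rank_le_of_surjective (Ideal.Quotient.mkₐ k P).toLinearMap
    (Ideal.Quotient.mkₐ_surjective k P)
end
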